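/- Let G be a bipartite graph with parts X and Y such that G contains no complete bipartite subgraph K_{s,t} (i.e., for any s vertices in X there are fewer than t vertices in Y adjacent to all of them). Then the number of edges of G is at most t^{1/s}·|X|·|Y|^{1-1/s} + s·|Y| up to a constant factor; concretely, |E(G)| ≤ t^{1/s}·|X|·|Y|^{1-1/s} + s·|Y| holds with explicit constant 1 replaced by a universal constant C. -/

import Mathlib

/-- Kővári–Sós–Turán theorem, asymmetric bipartite form. -/
theorem kovari_sos_turan :
    ∃ C : ℝ, 0 < C ∧
      ∀ (α β : Type) (X : Finset α) (Y : Finset β) (G : Finset (α × β)),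
        G ⊆ X ×ˢ Y →
        ∀ s t : ℕ, 0 < s → 0 < t →
        (¬ ∃ S : Finset α, S ⊆ X ∧ S.card = s ∧
            ∃ T : Finset β, T ⊆ Y ∧ T.card = t ∧
              ∀ x ∈ S, ∀ y ∈ T, (x, y) ∈ G) →
        (G.card : ℝ) ≤
          C * ((t : ℝ) ^ ((1 : ℝ) / s) * (X.card : ℝ) * (Y.card : ℝ) ^ (1 - (1 : ℝ) / s)
                + (s : ℝ) * (Y.card : ℝ)) := by
  classical
  refine ⟨2, by norm_num, ?_⟩
  intro α β X Y G hGXY s t hs ht hK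
  obtain ⟨k, rfl⟩ : ∃ k, s = k + 1 := ⟨s - 1, by omega⟩
  set s := k + 1 with hsdef
  set n := X.card with hn
  set m := Y.card with hm
  set N : β → Finset α := fun y => X.filter (fun x => (x, y) ∈ G) with hNdef
  have hNsub : ∀ y, N y ⊆ X := fun y => Finset.filter_subset _ _
  -- degree sum
  have hGcard : G.card = ∑ y ∈ Y, (N y).card := by
    rw [Finset.card_eq_sum_card_fiberwise
      (f := Prod.snd) (t := Y) (fun p hp => (Finset.mem_product.1 (hGXY hp)).2)]
    refine Finset.sum_congr rfl fun y hy => ?_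
    have himage : (N y).image (fun x => (x, y)) = G.filter (fun p => p.2 = y) := by
      ext ⟨a, b⟩
      constructor
      · intro hab
        obtain ⟨x, hx, hxe⟩ := Finset.mem_image.1 hab
        cases hxe
        simp only [hNdef, Finset.mem_filter] at hx
        exact Finset.mem_filter.2 ⟨hx.2, rfl⟩
      · intro hab
        obtain ⟨hG, hb⟩ := Finset.mem_filter.1 hab
        simp only at hb
        cases hb
        refine Finset.mem_image.2 ⟨a, ?_, rfl⟩
        simp only [hNdef, Finset.mem_filter]
        exact ⟨(Finset.mem_product.1 (hGXY hG)).1, hG⟩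
    rw [← himage, Finset.card_image_of_injective _ (fun a b h => congrArg Prod.fst h)]
  -- bound on common neighborhoods
  have hbound : ∀ S ∈ X.powersetCard s, (Y.filter (fun y => S ⊆ N y)).card ≤ t - 1 := by
    intro S hS
    rw [Finset.mem_powersetCard] at hS
    by_contra hlt
    push_neg at hlt
    have htle : t ≤ (Y.filter (fun y => S ⊆ N y)).card := by omega
    obtain ⟨T, hTsub, hTcard⟩ := Finset.exists_subset_card_eq htle
    refine hK ⟨S, hS.1, hS.2, T, hTsub.trans (Finset.filter_subset _ _), hTcard, ?_⟩
    intro x hx y hy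
    have := (Finset.mem_filter.1 (hTsub hy)).2 hx
    exact (Finset.mem_filter.1 this).2
  -- double counting
  have hmain : ∑ y ∈ Y, ((N y).card.choose s) ≤ (t - 1) * n.choose s := by
    calc ∑ y ∈ Y, ((N y).card.choose s)
        = ∑ y ∈ Y, ((X.powersetCard s).filter (fun S => S ⊆ N y)).card := by
          refine Finset.sum_congr rfl fun y hy => ?_
          rw [← Finset.card_powersetCard s (N y)]
          congr 1
          ext S
          simp only [Finset.mem_filter, Finset.mem_powersetCard]
          have hXN : S ⊆ N y → S ⊆ X := fun h => h.trans (hNsub y)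
          tauto
      _ = ∑ y ∈ Y, ∑ S ∈ X.powersetCard s, if S ⊆ N y then 1 else 0 :=
          Finset.sum_congr rfl fun y _ => Finset.card_filter _ _
      _ = ∑ S ∈ X.powersetCard s, ∑ y ∈ Y, if S ⊆ N y then 1 else 0 := Finset.sum_comm
      _ = ∑ S ∈ X.powersetCard s, (Y.filter (fun y => S ⊆ N y)).card :=
          Finset.sum_congr rfl fun S _ => (Finset.card_filter _ _).symm
      _ ≤ ∑ _S ∈ X.powersetCard s, (t - 1) := Finset.sum_le_sum hbound
      _ = (t - 1) * n.choose s := by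
          rw [Finset.sum_const, smul_eq_mul, Finset.card_powersetCard, mul_comm]
  -- descFactorial version
  have hdf : ∑ y ∈ Y, ((N y).card.descFactorial s) ≤ t * n ^ s := by
    calc ∑ y ∈ Y, ((N y).card.descFactorial s)
        = s.factorial * ∑ y ∈ Y, ((N y).card.choose s) := by
          rw [Finset.mul_sum]
          exact Finset.sum_congr rfl fun y _ => Nat.descFactorial_eq_factorial_mul_choose _ _
      _ ≤ s.factorial * ((t - 1) * n.choose s) := Nat.mul_le_mul_left _ hmain
      _ = (t - 1) * n.descFactorial s := by
          rw [Nat.descFactorial_eq_factorial_mul_choose]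
          ring
      _ ≤ t * n ^ s :=
          Nat.mul_le_mul (Nat.sub_le t 1) (Nat.descFactorial_le_pow n s)
  -- big-degree vertices
  set Y2 : Finset β := Y.filter (fun y => 2 * s ≤ (N y).card) with hY2def
  have hsum2 : ∑ y ∈ Y2, (N y).card ^ s ≤ 2 ^ s * (t * n ^ s) := by
    calc ∑ y ∈ Y2, (N y).card ^ s
        ≤ ∑ y ∈ Y2, 2 ^ s * ((N y).card.descFactorial s) := by
          refine Finset.sum_le_sum fun y hy => ?_
          have hy2 : 2 * s ≤ (N y).card := (Finset.mem_filter.1 hy).2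
          set d := (N y).card with hd
          calc d ^ s ≤ (2 * (d + 1 - s)) ^ s :=
                Nat.pow_le_pow_left (by omega) s
            _ = 2 ^ s * (d + 1 - s) ^ s := mul_pow 2 _ s
            _ ≤ 2 ^ s * d.descFactorial s :=
                Nat.mul_le_mul_left _ (Nat.pow_sub_le_descFactorial d s)
      _ = 2 ^ s * ∑ y ∈ Y2, ((N y).card.descFactorial s) := (Finset.mul_sum _ _ _).symm
      _ ≤ 2 ^ s * ∑ y ∈ Y, ((N y).card.descFactorial s) := by
          refine Nat.mul_le_mul_left _ (Finset.sum_le_sum_of_subset (Finset.filter_subset _ _))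
      _ ≤ 2 ^ s * (t * n ^ s) := Nat.mul_le_mul_left _ hdf
  -- edge split
  have hsplit : G.card ≤ (∑ y ∈ Y2, (N y).card) + 2 * s * m := by
    rw [hGcard, ← Finset.sum_filter_add_sum_filter_not Y (fun y => 2 * s ≤ (N y).card)]
    refine Nat.add_le_add le_rfl ?_
    calc ∑ y ∈ Y.filter (fun y => ¬ 2 * s ≤ (N y).card), (N y).card
        ≤ ∑ _y ∈ Y.filter (fun y => ¬ 2 * s ≤ (N y).card), 2 * s :=
          Finset.sum_le_sum fun y hy => le_of_lt (by
            have := (Finset.mem_filter.1 hy).2; omega)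
      _ = (Y.filter (fun y => ¬ 2 * s ≤ (N y).card)).card * (2 * s) := by
          rw [Finset.sum_const, smul_eq_mul]
      _ ≤ m * (2 * s) := Nat.mul_le_mul_right _ (Finset.card_filter_le _ _)
      _ = 2 * s * m := by ring
  set E2 : ℕ := ∑ y ∈ Y2, (N y).card with hE2
  -- real bound on E2
  have hB0 : (0:ℝ) ≤ 2 * (t : ℝ) ^ ((1:ℝ)/s) * n * (m:ℝ) ^ (1 - (1:ℝ)/s) := by
    positivity
  have hE2real : (E2 : ℝ) ≤ 2 * (t : ℝ) ^ ((1:ℝ)/s) * n * (m:ℝ) ^ (1 - (1:ℝ)/s) := by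
    rcases Finset.eq_empty_or_nonempty Y2 with hY2e | hY2ne
    · have hz : E2 = 0 := by rw [hE2, hY2e, Finset.sum_empty]
      rw [hz, Nat.cast_zero]
      exact hB0
    · have hcardpos : (0:ℝ) < (Y2.card : ℝ) ^ k := by
        have := Finset.card_pos.2 hY2ne
        positivity
      have hjensen := pow_sum_div_card_le_sum_pow
        (s := Y2) (f := fun y => ((N y).card : ℝ)) (fun i _ => by positivity) k
      have hsum2R : ∑ y ∈ Y2, ((N y).card : ℝ) ^ (k+1) ≤ 2 ^ (k+1) * ((t:ℝ) * (n:ℝ) ^ (k+1)) := by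
        exact_mod_cast Nat.cast_le.2 hsum2
      have hYm : ((Y2.card : ℝ)) ^ k ≤ (m : ℝ) ^ k := by
        have : Y2.card ≤ m := Finset.card_filter_le _ _
        exact pow_le_pow_left₀ (by positivity) (Nat.cast_le.2 this) k
      have hpow : (E2 : ℝ) ^ (k+1) ≤ (m:ℝ) ^ k * (2 ^ (k+1) * ((t:ℝ) * (n:ℝ) ^ (k+1))) := by
        have h1 : (E2 : ℝ) ^ (k+1) ≤ (Y2.card : ℝ) ^ k * ∑ y ∈ Y2, ((N y).card : ℝ) ^ (k+1) := by
          rw [hE2]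
          push_cast
          calc (∑ y ∈ Y2, ((N y).card:ℝ)) ^ (k+1)
              = ((∑ y ∈ Y2, ((N y).card:ℝ)) ^ (k+1) / (Y2.card : ℝ) ^ k) * (Y2.card : ℝ) ^ k := by
                exact (div_mul_cancel₀ _ (ne_of_gt hcardpos)).symm
            _ ≤ (∑ y ∈ Y2, ((N y).card:ℝ) ^ (k+1)) * (Y2.card : ℝ) ^ k :=
                mul_le_mul_of_nonneg_right hjensen (le_of_lt hcardpos)
            _ = (Y2.card : ℝ) ^ k * ∑ y ∈ Y2, ((N y).card:ℝ) ^ (k+1) := mul_comm _ _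
        calc (E2 : ℝ) ^ (k+1)
            ≤ (Y2.card : ℝ) ^ k * ∑ y ∈ Y2, ((N y).card : ℝ) ^ (k+1) := h1
          _ ≤ (Y2.card : ℝ) ^ k * (2 ^ (k+1) * ((t:ℝ) * (n:ℝ) ^ (k+1))) :=
              mul_le_mul_of_nonneg_left hsum2R (le_of_lt (by positivity))
          _ ≤ (m:ℝ) ^ k * (2 ^ (k+1) * ((t:ℝ) * (n:ℝ) ^ (k+1))) :=
              mul_le_mul_of_nonneg_right hYm (by positivity)
      -- take (k+1)-th roots
      refine le_of_pow_le_pow_left₀ (Nat.succ_ne_zero k) hB0 ?_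
      have hsR : ((s : ℕ) : ℝ) = (k : ℝ) + 1 := by push_cast [hsdef]; ring
      have hsRpos : (0:ℝ) < (k : ℝ) + 1 := by positivity
      have hrt : (((t:ℝ) ^ ((1:ℝ)/s)) : ℝ) ^ (k+1) = (t : ℝ) := by
        rw [← Real.rpow_natCast ((t:ℝ) ^ ((1:ℝ)/s)) (k+1),
          ← Real.rpow_mul (by positivity), hsR]
        push_cast
        rw [one_div_mul_cancel (ne_of_gt hsRpos), Real.rpow_one]
      have hrm : (((m:ℝ) ^ (1 - (1:ℝ)/s)) : ℝ) ^ (k+1) = (m : ℝ) ^ k := by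
        rw [← Real.rpow_natCast ((m:ℝ) ^ (1 - (1:ℝ)/s)) (k+1),
          ← Real.rpow_mul (by positivity), hsR]
        have : (1 - 1/((k:ℝ)+1)) * ((k:ℝ)+1) = (k:ℝ) := by field_simp; ring
        push_cast
        rw [this, Real.rpow_natCast]
      calc (E2 : ℝ) ^ (k+1)
          ≤ (m:ℝ) ^ k * (2 ^ (k+1) * ((t:ℝ) * (n:ℝ) ^ (k+1))) := hpow
        _ = 2 ^ (k+1) * (t:ℝ) * (n:ℝ) ^ (k+1) * ((m:ℝ) ^ k) := by ring
        _ = (2 * (t : ℝ) ^ ((1:ℝ)/s) * n * (m:ℝ) ^ (1 - (1:ℝ)/s)) ^ (k+1) := by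
            rw [mul_pow, mul_pow, mul_pow, hrt, hrm]
  -- conclude
  have hGR : (G.card : ℝ) ≤ (E2 : ℝ) + 2 * s * m := by
    have := hsplit
    push_cast
    exact_mod_cast Nat.cast_le.2 this
  calc (G.card : ℝ) ≤ (E2 : ℝ) + 2 * s * m := hGR
    _ ≤ 2 * (t : ℝ) ^ ((1:ℝ)/s) * n * (m:ℝ) ^ (1 - (1:ℝ)/s) + 2 * s * m :=
        add_le_add_left hE2real _
    _ = 2 * ((t : ℝ) ^ ((1:ℝ)/s) * n * (m:ℝ) ^ (1 - (1:ℝ)/s) + s * m) := by ring
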